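/- arXiv:2201.00260 — 2 statements merged into one kernel-verified Lean document; each statement's English description precedes it below -/
import Mathlib

section
/- Suppose g : (0,T) → ℝ is twice differentiable with g'' > 0, B > 0, and φ(t) ∈ (t,T) is the unique solution of g'(φ(t)) = B/(φ(t)-t)², differentiable in t. Then differentiating the first-order condition yields 0 < φ'(t) < 1, and the function V(t) = g(φ(t)) + B/(φ(t)-t) satisfies V''(t) = 2B(φ(t)-t)(1-φ'(t))/(φ(t)-t)⁴ > 0, hence V is strictly convex. -/
/-- Differentiating the first-order condition `g'(φ(t)) = B/(φ(t) - t)²` yields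
`0 < φ'(t) < 1`, and `V(t) = g(φ(t)) + B/(φ(t) - t)` satisfies
`V''(t) = 2B(φ(t) - t)(1 - φ'(t))/(φ(t) - t)⁴ > 0`, hence `V` is strictly
convex on `[0,T)`. -/
theorem second_derivative_value_function (T B : ℝ) (hT : 0 < T) (hB : 0 < B)
    (g g' g'' : ℝ → ℝ)
    (hg : ∀ x ∈ Set.Ioo (0:ℝ) T, HasDerivAt g (g' x) x)
    (hg' : ∀ x ∈ Set.Ioo (0:ℝ) T, HasDerivAt g' (g'' x) x)
    (hg'' : ∀ x ∈ Set.Ioo (0:ℝ) T, 0 < g'' x)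
    (φ φ' : ℝ → ℝ)
    (hφmem : ∀ t ∈ Set.Ico (0:ℝ) T, φ t ∈ Set.Ioo t T)
    (hφdiff : ∀ t ∈ Set.Ico (0:ℝ) T, HasDerivAt φ (φ' t) t)
    (hFOC : ∀ t ∈ Set.Ico (0:ℝ) T, g' (φ t) = B / (φ t - t) ^ 2) :
    (∀ t ∈ Set.Ico (0:ℝ) T, 0 < φ' t ∧ φ' t < 1) ∧
    (∃ V' V'' : ℝ → ℝ,
      (∀ t ∈ Set.Ico (0:ℝ) T,
        HasDerivAt (fun s => g (φ s) + B / (φ s - s)) (V' t) t ∧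
        HasDerivAt V' (V'' t) t ∧
        V'' t = 2 * B * (φ t - t) * (1 - φ' t) / (φ t - t) ^ 4 ∧ 0 < V'' t) ∧
      StrictConvexOn ℝ (Set.Ico 0 T) (fun s => g (φ s) + B / (φ s - s))) := by
  have key : ∀ t ∈ Set.Ico (0:ℝ) T,
      g'' (φ t) * φ' t * (φ t - t) ^ 3 = 2 * B * (1 - φ' t) := by
    intro t ht
    obtain ⟨ht0, htT⟩ := ht
    have hφt := hφmem t ⟨ht0, htT⟩
    have hmem : φ t ∈ Set.Ioo (0:ℝ) T := ⟨lt_of_le_of_lt ht0 hφt.1, hφt.2⟩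
    have hD : (0:ℝ) < φ t - t := sub_pos.mpr hφt.1
    have hDne : φ t - t ≠ 0 := hD.ne'
    have hφd := hφdiff t ⟨ht0, htT⟩
    have hsub : HasDerivAt (fun s => φ s - s) (φ' t - 1) t := hφd.sub (hasDerivAt_id t)
    have hL : HasDerivAt (fun s => g' (φ s)) (g'' (φ t) * φ' t) t :=
      (hg' (φ t) hmem).comp t hφd
    have hR : HasDerivAt (fun s => B / (φ s - s) ^ 2)
        ((0 * (φ t - t) ^ 2 - B * (2 * (φ t - t) ^ 1 * (φ' t - 1))) / ((φ t - t) ^ 2) ^ 2) t :=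
      (hasDerivAt_const t B).div (hsub.pow 2) (pow_ne_zero 2 hDne)
    have hev : (fun s => g' (φ s)) =ᶠ[nhdsWithin t (Set.Ici t)] (fun s => B / (φ s - s) ^ 2) := by
      have h1 : ∀ᶠ s in nhds t, s < T := eventually_lt_nhds htT
      have h2 : ∀ᶠ s in nhdsWithin t (Set.Ici t), s < T := h1.filter_mono nhdsWithin_le_nhds
      have h3 : ∀ᶠ s in nhdsWithin t (Set.Ici t), s ∈ Set.Ici t := eventually_mem_nhdsWithin
      filter_upwards [h2, h3] with s hs1 hs2
      exact hFOC s ⟨le_trans ht0 hs2, hs1⟩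
    have u := uniqueDiffOn_Ici t t Set.self_mem_Ici
    have hLw := hL.hasDerivWithinAt (s := Set.Ici t)
    have hRw := hR.hasDerivWithinAt (s := Set.Ici t)
    have hL2 : HasDerivWithinAt (fun s => g' (φ s))
        ((0 * (φ t - t) ^ 2 - B * (2 * (φ t - t) ^ 1 * (φ' t - 1))) / ((φ t - t) ^ 2) ^ 2)
        (Set.Ici t) t :=
      hRw.congr_of_eventuallyEq hev (hFOC t ⟨ht0, htT⟩)
    have heq := (hLw.derivWithin u).symm.trans (hL2.derivWithin u)
    field_simp at heq
    nlinarith [heq, pow_pos hD 3, pow_pos hD 4]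
  have bounds : ∀ t ∈ Set.Ico (0:ℝ) T, 0 < φ' t ∧ φ' t < 1 := by
    intro t ht
    have hφt := hφmem t ht
    have hmem : φ t ∈ Set.Ioo (0:ℝ) T := ⟨lt_of_le_of_lt ht.1 hφt.1, hφt.2⟩
    have hc := hg'' (φ t) hmem
    have hD : (0:ℝ) < φ t - t := sub_pos.mpr hφt.1
    have hk := key t ht
    constructor
    · nlinarith [pow_pos hD 3, mul_pos hc (pow_pos hD 3)]
    · nlinarith [pow_pos hD 3, mul_pos hc (pow_pos hD 3)]
  have hV1 : ∀ t ∈ Set.Ico (0:ℝ) T,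
      HasDerivAt (fun s => g (φ s) + B / (φ s - s)) (B / (φ t - t) ^ 2) t := by
    intro t ht
    have hφt := hφmem t ht
    have hmem : φ t ∈ Set.Ioo (0:ℝ) T := ⟨lt_of_le_of_lt ht.1 hφt.1, hφt.2⟩
    have hD : (0:ℝ) < φ t - t := sub_pos.mpr hφt.1
    have hDne : φ t - t ≠ 0 := hD.ne'
    have hφd := hφdiff t ht
    have hsub : HasDerivAt (fun s => φ s - s) (φ' t - 1) t := hφd.sub (hasDerivAt_id t)
    have h := ((hg (φ t) hmem).comp t hφd).add ((hasDerivAt_const t B).div hsub hDne)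
    refine h.congr_deriv ?_
    rw [hFOC t ht]
    ring
  have hV2 : ∀ t ∈ Set.Ico (0:ℝ) T,
      HasDerivAt (fun t => B / (φ t - t) ^ 2)
        (2 * B * (φ t - t) * (1 - φ' t) / (φ t - t) ^ 4) t := by
    intro t ht
    have hφt := hφmem t ht
    have hD : (0:ℝ) < φ t - t := sub_pos.mpr hφt.1
    have hDne : φ t - t ≠ 0 := hD.ne'
    have hsub : HasDerivAt (fun s => φ s - s) (φ' t - 1) t :=
      (hφdiff t ht).sub (hasDerivAt_id t)
    have h := (hasDerivAt_const t B).div (hsub.pow 2) (pow_ne_zero 2 hDne)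
    refine h.congr_deriv ?_
    simp only [Pi.pow_apply, Nat.cast_ofNat]
    field_simp
    ring
  refine ⟨bounds, ?_⟩
  refine ⟨fun t => B / (φ t - t) ^ 2,
    fun t => 2 * B * (φ t - t) * (1 - φ' t) / (φ t - t) ^ 4, ?_, ?_⟩
  · intro t ht
    have hφt := hφmem t ht
    have hD : (0:ℝ) < φ t - t := sub_pos.mpr hφt.1
    have hb := bounds t ht
    have hpos : 0 < 2 * B * (φ t - t) * (1 - φ' t) :=
      mul_pos (mul_pos (by positivity) hD) (sub_pos.mpr hb.2)
    exact ⟨hV1 t ht, hV2 t ht, rfl, div_pos hpos (pow_pos hD 4)⟩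
  · apply strictConvexOn_of_deriv2_pos (convex_Ico 0 T)
    · exact fun t ht => (hV1 t ht).continuousAt.continuousWithinAt
    · intro x hx
      rw [interior_Ico] at hx
      have hx' : x ∈ Set.Ico (0:ℝ) T := ⟨hx.1.le, hx.2⟩
      have hev : deriv (fun s => g (φ s) + B / (φ s - s)) =ᶠ[nhds x]
          (fun t => B / (φ t - t) ^ 2) := by
        filter_upwards [isOpen_Ioo.mem_nhds hx] with s hs
        exact (hV1 s ⟨hs.1.le, hs.2⟩).deriv
      have h2 : (deriv^[2] (fun s => g (φ s) + B / (φ s - s))) x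
          = 2 * B * (φ x - x) * (1 - φ' x) / (φ x - x) ^ 4 := by
        show deriv (deriv (fun s => g (φ s) + B / (φ s - s))) x = _
        rw [hev.deriv_eq, (hV2 x hx').deriv]
      rw [h2]
      have hφt := hφmem x hx'
      have hD : (0:ℝ) < φ x - x := sub_pos.mpr hφt.1
      have hb := bounds x hx'
      have hpos : 0 < 2 * B * (φ x - x) * (1 - φ' x) :=
        mul_pos (mul_pos (by positivity) hD) (sub_pos.mpr hb.2)
      exact div_pos hpos (pow_pos hD 4)
end

section
/- Suppose the cost C satisfies: C is differentiable in the switching time τ with ∂C/∂τ(p,p',t,τ,ρ) strictly increasing in the quantity τ - t, and V(p',·,ρ) is convex and differentiable on [0,T). If decision times t_1 < t_2 optimally generate switching times τ_1, τ_2 < T respectively (i.e., τ_i minimizes τ ↦ V(p',τ,ρ) + C(p,p',t_i,τ,ρ) over (t_i,T]), then τ_1 ≤ τ_2. Moreover, two distinct decision times cannot optimally generate the same switching time τ < T. -/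
/-- If the switching cost has `∂C/∂τ` strictly increasing in `τ - t` and the value
function `V` is convex and differentiable on `[0,T)`, then decision times
`t₁ < t₂` optimally generate switching times `τ₁ ≤ τ₂`; moreover two distinct
decision times cannot optimally generate the same switching time `< T`. -/
theorem switching_times_ordered (T : ℝ) (hT : 0 < T)
    (V V' : ℝ → ℝ)
    (hVconv : ConvexOn ℝ (Set.Ico 0 T) V)
    (hVdiff : ∀ s ∈ Set.Ico (0:ℝ) T, HasDerivAt V (V' s) s)
    (C : ℝ → ℝ → ℝ) (h : ℝ → ℝ) (hmono : StrictMono h)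
    (hC : ∀ t τ : ℝ, t < τ → HasDerivAt (C t) (h (τ - t)) τ)
    (t₁ t₂ τ₁ τ₂ : ℝ) (ht₁ : 0 ≤ t₁) (ht : t₁ < t₂) (ht₂ : t₂ < T)
    (hτ₁T : τ₁ < T) (hτ₂T : τ₂ < T)
    (hτ₁ : τ₁ ∈ Set.Ioc t₁ T)
    (hopt₁ : ∀ τ ∈ Set.Ioc t₁ T, V τ₁ + C t₁ τ₁ ≤ V τ + C t₁ τ)
    (hτ₂ : τ₂ ∈ Set.Ioc t₂ T)
    (hopt₂ : ∀ τ ∈ Set.Ioc t₂ T, V τ₂ + C t₂ τ₂ ≤ V τ + C t₂ τ) :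
    τ₁ ≤ τ₂ ∧ τ₁ ≠ τ₂ := by
  rcases le_or_gt τ₁ t₂ with hle | hgt
  · have hlt : τ₁ < τ₂ := lt_of_le_of_lt hle hτ₂.1
    exact ⟨hlt.le, hlt.ne⟩
  · have hτ₁mem : τ₁ ∈ Set.Ioc t₂ T := ⟨hgt, hτ₁.2⟩
    have hτ₂mem : τ₂ ∈ Set.Ioc t₁ T := ⟨ht.trans hτ₂.1, hτ₂.2⟩
    have e1 := hopt₁ τ₂ hτ₂mem
    have e2 := hopt₂ τ₁ hτ₁mem
    set g : ℝ → ℝ := fun τ => C t₁ τ - C t₂ τ with hg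
    have hgmono : StrictMonoOn g (Set.Ioi t₂) := by
      apply strictMonoOn_of_deriv_pos (convex_Ioi t₂)
      · intro x hx
        exact ((hC t₁ x (ht.trans hx)).sub (hC t₂ x hx)).continuousAt.continuousWithinAt
      · intro x hx
        rw [interior_Ioi] at hx
        have hd : HasDerivAt g (h (x - t₁) - h (x - t₂)) x := (hC t₁ x (ht.trans hx)).sub (hC t₂ x hx)
        rw [hd.deriv]
        have hlt : x - t₂ < x - t₁ := by linarith
        have := hmono hlt
        linarith
    have hgle : g τ₁ ≤ g τ₂ := by simp only [hg]; linarith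
    have hle : τ₁ ≤ τ₂ := by
      by_contra hcon
      push_neg at hcon
      have := hgmono hτ₂.1 hgt hcon
      linarith
    refine ⟨hle, fun heq => ?_⟩
    subst heq
    have hτmem : τ₁ ∈ Set.Ico (0:ℝ) T := ⟨le_trans ht₁ hτ₁.1.le, hτ₁T⟩
    have hV := hVdiff τ₁ hτmem
    have hd₁ : HasDerivAt (fun τ => V τ + C t₁ τ) (V' τ₁ + h (τ₁ - t₁)) τ₁ :=
      hV.add (hC t₁ τ₁ hτ₁.1)
    have hd₂ : HasDerivAt (fun τ => V τ + C t₂ τ) (V' τ₁ + h (τ₁ - t₂)) τ₁ :=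
      hV.add (hC t₂ τ₁ hgt)
    have hmin₁ : IsLocalMin (fun τ => V τ + C t₁ τ) τ₁ := by
      filter_upwards [Ioo_mem_nhds hτ₁.1 hτ₁T] with x hx
      exact hopt₁ x ⟨hx.1, hx.2.le⟩
    have hmin₂ : IsLocalMin (fun τ => V τ + C t₂ τ) τ₁ := by
      filter_upwards [Ioo_mem_nhds hgt hτ₁T] with x hx
      exact hopt₂ x ⟨hx.1, hx.2.le⟩
    have z₁ := hmin₁.hasDerivAt_eq_zero hd₁
    have z₂ := hmin₂.hasDerivAt_eq_zero hd₂
    have hlt : τ₁ - t₂ < τ₁ - t₁ := by linarith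
    have := hmono hlt
    linarith
end
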